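/- Let λ = 1/√5, let r > 0, and let μ ∈ (0,1/2) satisfy sin τ + μ²τ ≥ 0 for all τ ≥ 0. Let γ(t) = (r cos t, r sin t, μ r t), with γ'(t) = (−r sin t, r cos t, μ r). Then for every τ ≥ 0 and every x ∈ [0, r], ⟨γ'(τ), (x,0,0) − γ(τ)⟩ ≤ λ‖γ'(τ)‖‖(x,0,0) − γ(τ)‖; that is, the open cone of half-aperture arccos(1/√5) with vertex γ(τ) directed by γ'(τ) does not meet the radial segment S = {(x,0,0) : 0 ≤ x ≤ r}. -/

import Mathlib

open scoped RealInnerProductSpace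
open Set

/-- The helix `t ↦ (r cos t, r sin t, μ r t)` in `ℝ³`. -/
noncomputable def helix (r μ t : ℝ) : EuclideanSpace ℝ (Fin 3) :=
  WithLp.toLp 2 ![r * Real.cos t, r * Real.sin t, μ * r * t]

/-- The derivative `t ↦ (−r sin t, r cos t, μ r)` of the helix. -/
noncomputable def helixD (r μ t : ℝ) : EuclideanSpace ℝ (Fin 3) :=
  WithLp.toLp 2 ![-(r * Real.sin t), r * Real.cos t, μ * r]

/-- A point `(x, 0, 0)` of the radial segment `S = {(x,0,0) : 0 ≤ x ≤ r}`. -/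
def segPt (x : ℝ) : EuclideanSpace ℝ (Fin 3) := WithLp.toLp 2 ![x, 0, 0]

/-- For `λ = 1/√5`, `r > 0` and `μ ∈ (0,1/2)` with
`sin τ + μ²τ ≥ 0` for all `τ ≥ 0`, the open cone of half-aperture `arccos(1/√5)` attached
to the helix at `γ(τ)` (for `τ ≥ 0`) does not meet the segment `{(x,0,0) : 0 ≤ x ≤ r}`. -/
theorem helix_cone_avoids_radial_segment (μ r : ℝ) (hμ0 : 0 < μ) (hμ : μ < 1 / 2)
    (hr : 0 < r) (hμ' : ∀ τ : ℝ, 0 ≤ τ → 0 ≤ Real.sin τ + μ ^ 2 * τ)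
    (τ : ℝ) (hτ : 0 ≤ τ) (x : ℝ) (hx0 : 0 ≤ x) (hxr : x ≤ r) :
    ⟪helixD r μ τ, segPt x - helix r μ τ⟫ ≤
      (1 / Real.sqrt 5) * ‖helixD r μ τ‖ * ‖segPt x - helix r μ τ‖ := by
  have h1 : ⟪helixD r μ τ, segPt x - helix r μ τ⟫ =
      -(r * (x * Real.sin τ + μ ^ 2 * r * τ)) := by
    simp [helixD, helix, segPt, PiLp.inner_apply, Fin.sum_univ_three, PiLp.sub_apply,
      Matrix.cons_val_zero, Matrix.cons_val_one, Matrix.head_cons]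
    ring
  have hkey : 0 ≤ x * Real.sin τ + μ ^ 2 * r * τ := by
    rcases le_or_gt 0 (Real.sin τ) with hs | hs
    · have := mul_nonneg hx0 hs
      have := mul_nonneg (mul_nonneg (sq_nonneg μ) hr.le) hτ
      nlinarith
    · have h2 := hμ' τ hτ
      have h3 : μ ^ 2 * r * τ ≥ r * (-Real.sin τ) := by nlinarith
      have h4 : x * Real.sin τ ≥ r * Real.sin τ := by nlinarith
      nlinarith
  have hL : ⟪helixD r μ τ, segPt x - helix r μ τ⟫ ≤ 0 := by
    rw [h1]; nlinarith
  have hR : 0 ≤ (1 / Real.sqrt 5) * ‖helixD r μ τ‖ * ‖segPt x - helix r μ τ‖ := by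
    positivity
  linarith
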